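/- Let k be a field, A a Hopf algebra over k, and M a left Hopf module over A with coaction ρ. Then M is cofree as an A-comodule: there exist a k-vector space V and a k-linear isomorphism f : A ⊗_k V → M such that ρ(f(a ⊗ v)) = Σ a₍₁₎ ⊗ f(a₍₂₎ ⊗ v) for all a ∈ A and v ∈ V, i.e. f intertwines the coaction Δ ⊗ id_V on A ⊗_k V with ρ. -/

import Mathlib

open TensorProduct

namespace HopfCofreeAux

section Aux

open Coalgebra HopfAlgebra LinearMap

universe u v w'

variable {k : Type u} {A : Type v} [Field k] [Ring A] [HopfAlgebra k A]
variable {N : Type w'} [AddCommGroup N] [Module k N]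

lemma nat1 {X X' Y Z : Type*} [AddCommGroup X] [Module k X] [AddCommGroup X'] [Module k X']
    [AddCommGroup Y] [Module k Y] [AddCommGroup Z] [Module k Z] (f : X →ₗ[k] X') :
    f.rTensor (Y ⊗[k] Z) ∘ₗ (TensorProduct.assoc k X Y Z).toLinearMap =
      (TensorProduct.assoc k X' Y Z).toLinearMap ∘ₗ (f.rTensor Y).rTensor Z := by
  simpa [rTensor, map_id] using map_map_comp_assoc_eq (R := k) f (.id (M := Y)) (.id (M := Z))

theorem core (ρ : N →ₗ[k] A ⊗[k] N)
    (hco : LinearMap.lTensor A ρ ∘ₗ ρ =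
      (TensorProduct.assoc k A A N).toLinearMap ∘ₗ
        LinearMap.rTensor N (Coalgebra.comul (R := k)) ∘ₗ ρ)
    (act : A ⊗[k] N →ₗ[k] N) :
    TensorProduct.map (LinearMap.mul' k A) act
        ∘ₗ (tensorTensorTensorComm k A A A N).toLinearMap
        ∘ₗ TensorProduct.map ((TensorProduct.comm k A A).toLinearMap ∘ₗ
            TensorProduct.map (antipode (R := k)) (antipode (R := k))) LinearMap.id
        ∘ₗ TensorProduct.map (Coalgebra.comul (R := k)) ρ ∘ₗ ρ
      = TensorProduct.mk k A N 1 ∘ₗ act ∘ₗ LinearMap.rTensor N (antipode (R := k)) ∘ₗ ρ := by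
  set S : A →ₗ[k] A := antipode (R := k) with hS
  set Δ : A →ₗ[k] A ⊗[k] A := Coalgebra.comul (R := k) with hΔ
  obtain ⟨Θ, hΘ⟩ : ∃ Θ' : (A ⊗[k] A) ⊗[k] (A ⊗[k] N) →ₗ[k] A ⊗[k] N, Θ' =
    TensorProduct.map (LinearMap.mul' k A) act
      ∘ₗ (tensorTensorTensorComm k A A A N).toLinearMap
      ∘ₗ TensorProduct.map ((TensorProduct.comm k A A).toLinearMap ∘ₗ
          TensorProduct.map S S) LinearMap.id := ⟨_, rfl⟩
  obtain ⟨g, hg⟩ : ∃ g' : A ⊗[k] A →ₗ[k] A, g' = LinearMap.mul' k A ∘ₗ S.rTensor A := ⟨_, rfl⟩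
  obtain ⟨Θ₂, hΘ₂⟩ : ∃ Θ₂' : (A ⊗[k] A) ⊗[k] N →ₗ[k] A ⊗[k] N, Θ₂' =
    (act ∘ₗ S.rTensor N).lTensor A ∘ₗ (TensorProduct.assoc k A A N).toLinearMap ∘ₗ
      (TensorProduct.comm k A A).toLinearMap.rTensor N := ⟨_, rfl⟩
  have step1 : TensorProduct.map Δ ρ = Δ.rTensor (A ⊗[k] N) ∘ₗ ρ.lTensor A := by
    rw [rTensor_comp_lTensor]
  have E1 : Θ ∘ₗ (TensorProduct.assoc k (A ⊗[k] A) A N).toLinearMap ∘ₗ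
      (TensorProduct.assoc k A A A).symm.toLinearMap.rTensor N =
      Θ₂ ∘ₗ (g.lTensor A).rTensor N := by
    ext x y z n
    simp [hΘ, hΘ₂, hg, mul'_apply]
  have hanti : g ∘ₗ Δ = Algebra.linearMap k A ∘ₗ Coalgebra.counit := by
    rw [hg, hΔ, hS, LinearMap.comp_assoc]
    exact mul_antipode_rTensor_comul
  have E2 : ((Algebra.linearMap k A ∘ₗ Coalgebra.counit).lTensor A) ∘ₗ Δ =
      (TensorProduct.mk k A A).flip 1 := by
    rw [lTensor_comp, LinearMap.comp_assoc, hΔ, Coalgebra.lTensor_counit_comp_comul]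
    ext a
    simp
  have E3 : Θ₂ ∘ₗ ((TensorProduct.mk k A A).flip 1).rTensor N =
      TensorProduct.mk k A N 1 ∘ₗ act ∘ₗ S.rTensor N := by
    ext x n
    simp [hΘ₂]
  have merge : (g.lTensor A).rTensor N ∘ₗ (Δ.lTensor A).rTensor N ∘ₗ Δ.rTensor N =
      ((TensorProduct.mk k A A).flip 1).rTensor N := by
    rw [← LinearMap.comp_assoc, ← rTensor_comp, ← lTensor_comp, hanti, ← rTensor_comp, E2]
  calc
    TensorProduct.map (LinearMap.mul' k A) act
        ∘ₗ (tensorTensorTensorComm k A A A N).toLinearMap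
        ∘ₗ TensorProduct.map ((TensorProduct.comm k A A).toLinearMap ∘ₗ
            TensorProduct.map S S) LinearMap.id
        ∘ₗ TensorProduct.map Δ ρ ∘ₗ ρ
      = Θ ∘ₗ Δ.rTensor (A ⊗[k] N) ∘ₗ (ρ.lTensor A ∘ₗ ρ) := by
          rw [step1, hΘ]; simp only [LinearMap.comp_assoc]
    _ = Θ ∘ₗ Δ.rTensor (A ⊗[k] N) ∘ₗ ((TensorProduct.assoc k A A N).toLinearMap ∘ₗ
          Δ.rTensor N ∘ₗ ρ) := by rw [hco]
    _ = Θ ∘ₗ (TensorProduct.assoc k (A ⊗[k] A) A N).toLinearMap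
          ∘ₗ (Δ.rTensor A).rTensor N ∘ₗ Δ.rTensor N ∘ₗ ρ := by
          rw [show Δ.rTensor (A ⊗[k] N) ∘ₗ ((TensorProduct.assoc k A A N).toLinearMap ∘ₗ
              Δ.rTensor N ∘ₗ ρ) = (Δ.rTensor (A ⊗[k] N) ∘ₗ (TensorProduct.assoc k A A N).toLinearMap) ∘ₗ
              Δ.rTensor N ∘ₗ ρ from by simp only [LinearMap.comp_assoc], nat1]
          simp only [LinearMap.comp_assoc]
    _ = Θ ∘ₗ (TensorProduct.assoc k (A ⊗[k] A) A N).toLinearMap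
          ∘ₗ ((Δ.rTensor A) ∘ₗ Δ).rTensor N ∘ₗ ρ := by
          rw [rTensor_comp]; simp only [LinearMap.comp_assoc]
    _ = Θ ∘ₗ (TensorProduct.assoc k (A ⊗[k] A) A N).toLinearMap
          ∘ₗ ((TensorProduct.assoc k A A A).symm.toLinearMap ∘ₗ Δ.lTensor A ∘ₗ Δ).rTensor N
          ∘ₗ ρ := by
          rw [show (Δ.rTensor A) ∘ₗ Δ = (TensorProduct.assoc k A A A).symm.toLinearMap ∘ₗ
            Δ.lTensor A ∘ₗ Δ from (Coalgebra.coassoc_symm (R := k)).symm]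
    _ = (Θ ∘ₗ (TensorProduct.assoc k (A ⊗[k] A) A N).toLinearMap
          ∘ₗ (TensorProduct.assoc k A A A).symm.toLinearMap.rTensor N)
          ∘ₗ ((Δ.lTensor A).rTensor N ∘ₗ Δ.rTensor N) ∘ₗ ρ := by
          rw [rTensor_comp, rTensor_comp]; simp only [LinearMap.comp_assoc]
    _ = Θ₂ ∘ₗ ((g.lTensor A).rTensor N ∘ₗ (Δ.lTensor A).rTensor N ∘ₗ Δ.rTensor N) ∘ₗ ρ := by
          rw [E1]; simp only [LinearMap.comp_assoc]
    _ = (Θ₂ ∘ₗ ((TensorProduct.mk k A A).flip 1).rTensor N) ∘ₗ ρ := by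
          rw [merge]; simp only [LinearMap.comp_assoc]
    _ = TensorProduct.mk k A N 1 ∘ₗ act ∘ₗ S.rTensor N ∘ₗ ρ := by
          rw [E3]; simp only [LinearMap.comp_assoc]


-- helper sums
lemma sum_counit_smul {a : A} {ι : Type*} (r : Coalgebra.Repr k a ι) :
    ∑ i ∈ r.index, Coalgebra.counit (R := k) (r.left i) • r.right i = a := by
  have h := congrArg (TensorProduct.lid k A) (Coalgebra.sum_counit_tmul_eq (R := k) r)
  simp only [map_sum, TensorProduct.lid_tmul, one_smul] at h
  exact h

lemma sum_smul_counit {a : A} {ι : Type*} (r : Coalgebra.Repr k a ι) :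
    ∑ i ∈ r.index, Coalgebra.counit (R := k) (r.right i) • r.left i = a := by
  have h := congrArg (TensorProduct.rid k A) (Coalgebra.sum_tmul_counit_eq (R := k) r)
  simp only [map_sum, TensorProduct.rid_tmul, one_smul] at h
  exact h

section Conv
variable {B : Type*} [Ring B] [Algebra k B]

noncomputable def conv (F G : A →ₗ[k] B) : A →ₗ[k] B :=
  LinearMap.mul' k B ∘ₗ TensorProduct.map F G ∘ₗ Coalgebra.comul (R := k)

lemma conv_apply_repr (F G : A →ₗ[k] B) {a : A} {ι : Type*} (r : Coalgebra.Repr k a ι) :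
    conv F G a = ∑ i ∈ r.index, F (r.left i) * G (r.right i) := by
  simp only [conv, LinearMap.comp_apply, ← r.eq, map_sum, TensorProduct.map_tmul,
    LinearMap.mul'_apply]

noncomputable def cunit : A →ₗ[k] B := Algebra.linearMap k B ∘ₗ Coalgebra.counit (R := k)

lemma conv_cunit_left (F : A →ₗ[k] B) : conv cunit F = F := by
  apply LinearMap.ext; intro a
  rw [conv_apply_repr cunit F (ℛ k a)]
  calc ∑ i ∈ (ℛ k a).index, cunit ((ℛ k a).left i) * F ((ℛ k a).right i)
      = ∑ i ∈ (ℛ k a).index,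
          F (Coalgebra.counit (R := k) ((ℛ k a).left i) • (ℛ k a).right i) := by
        refine Finset.sum_congr rfl fun i _ => ?_
        rw [map_smul, cunit, LinearMap.comp_apply, Algebra.linearMap_apply,
          ← Algebra.smul_def]
    _ = F a := by rw [← map_sum, sum_counit_smul]

lemma conv_cunit_right (F : A →ₗ[k] B) : conv F cunit = F := by
  apply LinearMap.ext; intro a
  rw [conv_apply_repr F cunit (ℛ k a)]
  calc ∑ i ∈ (ℛ k a).index, F ((ℛ k a).left i) * cunit ((ℛ k a).right i)
      = ∑ i ∈ (ℛ k a).index,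
          F (Coalgebra.counit (R := k) ((ℛ k a).right i) • (ℛ k a).left i) := by
        refine Finset.sum_congr rfl fun i _ => ?_
        rw [map_smul, cunit, LinearMap.comp_apply, Algebra.linearMap_apply,
          ← Algebra.commutes, ← Algebra.smul_def]
    _ = F a := by rw [← map_sum, sum_smul_counit]

lemma conv_assoc (F G H : A →ₗ[k] B) : conv (conv F G) H = conv F (conv G H) := by
  apply LinearMap.ext; intro a
  set r := ℛ k a with hr
  have rl : ∀ i : A × A, Coalgebra.Repr k (r.left i) (A × A) := fun i => ℛ k (r.left i)
  have rr : ∀ i : A × A, Coalgebra.Repr k (r.right i) (A × A) := fun i => ℛ k (r.right i)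
  have key := Coalgebra.sum_tmul_tmul_eq r rl rr
  have key2 := congrArg (LinearMap.mul' k B ∘ₗ
    TensorProduct.map F (LinearMap.mul' k B ∘ₗ TensorProduct.map G H)) key
  simp only [map_sum, LinearMap.comp_apply, TensorProduct.map_tmul,
    LinearMap.mul'_apply] at key2
  rw [conv_apply_repr (conv F G) H r, conv_apply_repr F (conv G H) r]
  calc ∑ i ∈ r.index, conv F G (r.left i) * H (r.right i)
      = ∑ i ∈ r.index, ∑ j ∈ (rl i).index,
          F ((rl i).left j) * (G ((rl i).right j) * H (r.right i)) := by
        refine Finset.sum_congr rfl fun i _ => ?_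
        rw [conv_apply_repr F G (rl i), Finset.sum_mul]
        exact Finset.sum_congr rfl fun j _ => mul_assoc _ _ _
    _ = ∑ i ∈ r.index, ∑ j ∈ (rr i).index,
          F (r.left i) * (G ((rr i).left j) * H ((rr i).right j)) := key2
    _ = ∑ i ∈ r.index, F (r.left i) * conv G H (r.right i) := by
        refine Finset.sum_congr rfl fun i _ => ?_
        rw [conv_apply_repr G H (rr i), Finset.mul_sum]

end Conv

lemma claim_i : conv (Coalgebra.comul (R := k) (A := A))
    (Coalgebra.comul (R := k) ∘ₗ antipode (R := k)) = cunit := by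
  apply LinearMap.ext; intro a
  have r := ℛ k a
  rw [conv_apply_repr _ _ r]
  calc ∑ i ∈ r.index, Coalgebra.comul (R := k) (r.left i) *
        (Coalgebra.comul (R := k) ∘ₗ antipode (R := k)) (r.right i)
      = ∑ i ∈ r.index, Coalgebra.comul (R := k)
          (r.left i * antipode (R := k) (r.right i)) := by
        refine Finset.sum_congr rfl fun i _ => ?_
        rw [LinearMap.comp_apply, Bialgebra.comul_mul]
    _ = Coalgebra.comul (R := k) (algebraMap k A (Coalgebra.counit (R := k) a)) := by
        rw [← map_sum, sum_mul_antipode_eq_algebraMap_counit]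
    _ = cunit a := by
        rw [Bialgebra.comul_algebraMap, cunit, LinearMap.comp_apply, Algebra.linearMap_apply]

-- Fact A : multiplication on A ⊗ A
lemma mulAA : LinearMap.mul' k (A ⊗[k] A) =
    TensorProduct.map (LinearMap.mul' k A) (LinearMap.mul' k A)
      ∘ₗ (tensorTensorTensorComm k A A A A).toLinearMap := by
  ext x y z w
  simp [Algebra.TensorProduct.tmul_mul_tmul]

lemma coassoc_A : LinearMap.lTensor A (Coalgebra.comul (R := k) (A := A)) ∘ₗ
      Coalgebra.comul (R := k) =
    (TensorProduct.assoc k A A A).toLinearMap ∘ₗ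
      LinearMap.rTensor A (Coalgebra.comul (R := k)) ∘ₗ Coalgebra.comul (R := k) := by
  exact (Coalgebra.coassoc (R := k)).symm

lemma claim_ii : conv ((TensorProduct.comm k A A).toLinearMap ∘ₗ
      TensorProduct.map (antipode (R := k)) (antipode (R := k)) ∘ₗ
      Coalgebra.comul (R := k) (A := A))
    (Coalgebra.comul (R := k)) = cunit := by
  have h := core (k := k) (A := A) (Coalgebra.comul (R := k)) coassoc_A (LinearMap.mul' k A)
  have lhs_eq : conv ((TensorProduct.comm k A A).toLinearMap ∘ₗ
        TensorProduct.map (antipode (R := k)) (antipode (R := k)) ∘ₗ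
        Coalgebra.comul (R := k) (A := A)) (Coalgebra.comul (R := k)) =
      TensorProduct.map (LinearMap.mul' k A) (LinearMap.mul' k A)
        ∘ₗ (tensorTensorTensorComm k A A A A).toLinearMap
        ∘ₗ TensorProduct.map ((TensorProduct.comm k A A).toLinearMap ∘ₗ
            TensorProduct.map (antipode (R := k)) (antipode (R := k))) LinearMap.id
        ∘ₗ TensorProduct.map (Coalgebra.comul (R := k)) (Coalgebra.comul (R := k))
        ∘ₗ Coalgebra.comul (R := k) := by
    rw [conv, mulAA]
    rw [show TensorProduct.map ((TensorProduct.comm k A A).toLinearMap ∘ₗ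
        TensorProduct.map (antipode (R := k)) (antipode (R := k)) ∘ₗ
        Coalgebra.comul (R := k) (A := A)) (Coalgebra.comul (R := k)) =
      TensorProduct.map ((TensorProduct.comm k A A).toLinearMap ∘ₗ
          TensorProduct.map (antipode (R := k)) (antipode (R := k))) LinearMap.id
        ∘ₗ TensorProduct.map (Coalgebra.comul (R := k)) (Coalgebra.comul (R := k)) from by
      rw [← TensorProduct.map_comp]
      congr 1 <;> simp only [LinearMap.comp_assoc, LinearMap.id_comp]]
    simp only [LinearMap.comp_assoc]
  rw [lhs_eq, h]
  rw [show LinearMap.mul' k A ∘ₗ LinearMap.rTensor A (antipode (R := k)) ∘ₗ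
      Coalgebra.comul (R := k) = Algebra.linearMap k A ∘ₗ Coalgebra.counit (R := k) from by
    rw [← LinearMap.comp_assoc]
    exact mul_antipode_rTensor_comul]
  apply LinearMap.ext; intro a
  simp [cunit, Algebra.TensorProduct.algebraMap_apply, Algebra.algebraMap_eq_smul_one,
    TensorProduct.tmul_smul, TensorProduct.smul_tmul', Algebra.TensorProduct.one_def]

theorem antipode_comul' :
    (Coalgebra.comul (R := k) (A := A)) ∘ₗ antipode (R := k) =
      (TensorProduct.comm k A A).toLinearMap ∘ₗ
        TensorProduct.map (antipode (R := k)) (antipode (R := k)) ∘ₗ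
        Coalgebra.comul (R := k) := by
  have h := conv_assoc ((TensorProduct.comm k A A).toLinearMap ∘ₗ
      TensorProduct.map (antipode (R := k)) (antipode (R := k)) ∘ₗ
      Coalgebra.comul (R := k) (A := A))
    (Coalgebra.comul (R := k))
    (Coalgebra.comul (R := k) ∘ₗ antipode (R := k))
  rw [claim_ii, claim_i, conv_cunit_left, conv_cunit_right] at h
  exact h


end Aux

end HopfCofreeAux

section

universe u v w

variable (k : Type u) (A : Type v) (M : Type w) [Field k] [Ring A] [HopfAlgebra k A]
  [AddCommGroup M] [Module k M] [Module A M] [IsScalarTower k A M]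

/-- The `A`-action on `M` as a `k`-bilinear map. -/
noncomputable def actionBilin : A →ₗ[k] M →ₗ[k] M where
  toFun a :=
    { toFun := fun m => a • m
      map_add' := fun m m' => smul_add a m m'
      map_smul' := fun c m => by
        simp only [RingHom.id_apply]
        rw [← algebraMap_smul A c m, ← mul_smul, ← Algebra.commutes, mul_smul,
          algebraMap_smul] }
  map_add' a b := LinearMap.ext fun m => add_smul a b m
  map_smul' c a := LinearMap.ext fun m => smul_assoc c a m

/-- The action map `A ⊗[k] M →ₗ[k] M`. -/
noncomputable def actionHom : A ⊗[k] M →ₗ[k] M :=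
  TensorProduct.lift (actionBilin k A M)

/-- The action of `A ⊗[k] A` on `A ⊗[k] M`, determined by
`(x ⊗ y) · (b ⊗ m) = (x * b) ⊗ (y • m)`. -/
noncomputable def bigAction : (A ⊗[k] A) ⊗[k] (A ⊗[k] M) →ₗ[k] A ⊗[k] M :=
  (TensorProduct.map (LinearMap.mul' k A) (actionHom k A M)).comp
    (TensorProduct.tensorTensorTensorComm k A A A M).toLinearMap

open Coalgebra HopfAlgebra LinearMap HopfCofreeAux

set_option maxHeartbeats 1000000 in
set_option synthInstance.maxHeartbeats 200000 in
/-- A left Hopf module `M` over a Hopf algebra `A` over a field `k` is cofree as an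
`A`-comodule: there are a `k`-vector space `V` and a `k`-linear isomorphism
`f : A ⊗[k] V ≃ M` intertwining the coaction `Δ ⊗ id_V` with `ρ`. -/
theorem hopfModule_cofree (ρ : M →ₗ[k] A ⊗[k] M)
    (hcoassoc : ∀ m : M,
      (TensorProduct.assoc k A A M)
          ((TensorProduct.map Coalgebra.comul LinearMap.id) (ρ m)) =
        (TensorProduct.map LinearMap.id ρ) (ρ m))
    (hcounit : ∀ m : M,
      (TensorProduct.lid k M)
          ((TensorProduct.map Coalgebra.counit LinearMap.id) (ρ m)) = m)
    (hcompat : ∀ (a : A) (m : M),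
      ρ (a • m) = bigAction k A M (Coalgebra.comul a ⊗ₜ[k] ρ m)) :
    ∃ (V : Type w) (_ : AddCommGroup V) (_ : Module k V) (f : (A ⊗[k] V) ≃ₗ[k] M),
      ∀ (a : A) (v : V),
        ρ (f (a ⊗ₜ[k] v)) =
          (TensorProduct.map LinearMap.id f.toLinearMap)
            ((TensorProduct.assoc k A A V) (Coalgebra.comul a ⊗ₜ[k] v)) := by
  classical
  set S : A →ₗ[k] A := antipode (R := k) with hS
  set Δ : A →ₗ[k] A ⊗[k] A := Coalgebra.comul (R := k) with hΔ
  set act : A ⊗[k] M →ₗ[k] M := actionHom k A M with hact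
  have act_tmul : ∀ (a : A) (m : M), act (a ⊗ₜ[k] m) = a • m := fun a m => rfl
  have bigAction_tmul : ∀ (x y b : A) (n : M),
      bigAction k A M ((x ⊗ₜ[k] y) ⊗ₜ[k] (b ⊗ₜ[k] n)) = (x * b) ⊗ₜ[k] (y • n) := by
    intro x y b n
    simp [bigAction, LinearMap.mul'_apply, act_tmul]; rfl
  -- map-level coassociativity
  have hco : LinearMap.lTensor A ρ ∘ₗ ρ =
      (TensorProduct.assoc k A A M).toLinearMap ∘ₗ LinearMap.rTensor M Δ ∘ₗ ρ := by
    apply LinearMap.ext; intro m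
    simpa [LinearMap.rTensor, LinearMap.lTensor] using (hcoassoc m).symm
  -- map-level compatibility
  have hcompat' : ρ ∘ₗ act = bigAction k A M ∘ₗ TensorProduct.map Δ ρ := by
    ext a m
    simpa [act_tmul] using hcompat a m
  obtain ⟨P, hP⟩ : ∃ P' : M →ₗ[k] M, P' = act ∘ₗ S.rTensor M ∘ₗ ρ := ⟨_, rfl⟩
  -- claim 1 : the image of P is coinvariant
  have claim1 : ρ ∘ₗ P = TensorProduct.mk k A M 1 ∘ₗ P := by
    have hbig : bigAction k A M = TensorProduct.map (LinearMap.mul' k A) act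
        ∘ₗ (TensorProduct.tensorTensorTensorComm k A A A M).toLinearMap := rfl
    have hcore := core (k := k) (A := A) ρ hco act
    calc ρ ∘ₗ P = (ρ ∘ₗ act) ∘ₗ S.rTensor M ∘ₗ ρ := by
          rw [hP]; simp only [LinearMap.comp_assoc]
      _ = bigAction k A M ∘ₗ (TensorProduct.map Δ ρ ∘ₗ S.rTensor M) ∘ₗ ρ := by
          rw [hcompat']; simp only [LinearMap.comp_assoc]
      _ = bigAction k A M ∘ₗ TensorProduct.map (Δ ∘ₗ S) ρ ∘ₗ ρ := by
          rw [show TensorProduct.map Δ ρ ∘ₗ S.rTensor M = TensorProduct.map (Δ ∘ₗ S) ρ from by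
            rw [LinearMap.rTensor, ← TensorProduct.map_comp, LinearMap.comp_id]]
      _ = bigAction k A M ∘ₗ TensorProduct.map ((TensorProduct.comm k A A).toLinearMap ∘ₗ
            TensorProduct.map S S) LinearMap.id ∘ₗ TensorProduct.map Δ ρ ∘ₗ ρ := by
          rw [show (Δ : A →ₗ[k] A ⊗[k] A) ∘ₗ S = (TensorProduct.comm k A A).toLinearMap ∘ₗ
              TensorProduct.map S S ∘ₗ Δ from antipode_comul',
            show TensorProduct.map ((TensorProduct.comm k A A).toLinearMap ∘ₗ
              TensorProduct.map S S ∘ₗ Δ) ρ = TensorProduct.map ((TensorProduct.comm k A A).toLinearMap ∘ₗ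
              TensorProduct.map S S) LinearMap.id ∘ₗ TensorProduct.map Δ ρ from by
            rw [← TensorProduct.map_comp]
            congr 1 <;> simp only [LinearMap.comp_assoc, LinearMap.id_comp]]
          simp only [LinearMap.comp_assoc]
      _ = TensorProduct.mk k A M 1 ∘ₗ act ∘ₗ S.rTensor M ∘ₗ ρ := by
          rw [hbig]
          simp only [LinearMap.comp_assoc]
          exact hcore
      _ = TensorProduct.mk k A M 1 ∘ₗ P := by rw [hP]
  -- the coinvariant submodule
  set V : Submodule k M := LinearMap.eqLocus ρ (TensorProduct.mk k A M 1) with hV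
  have hmem : ∀ m : M, P m ∈ V := fun m => LinearMap.congr_fun claim1 m
  set Q : M →ₗ[k] V := P.codRestrict V hmem with hQ
  set f0 : A ⊗[k] ↥V →ₗ[k] M := act ∘ₗ (V.subtype).lTensor A with hf0
  set inv0 : M →ₗ[k] A ⊗[k] ↥V := Q.lTensor A ∘ₗ ρ with hinv0
  have hv_coact : ∀ v : V, ρ (v : M) = (1 : A) ⊗ₜ[k] (v : M) := fun v => v.2
  have f0_tmul : ∀ (a : A) (v : V), f0 (a ⊗ₜ[k] v) = a • (v : M) := by
    intro a v; simp [hf0, act_tmul]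
  -- P (b • m) = counit b • m for coinvariant m
  have hPsmul : ∀ (b : A) (m : M), ρ m = (1 : A) ⊗ₜ[k] m →
      P (b • m) = Coalgebra.counit (R := k) b • m := by
    intro b m hm
    obtain ⟨rb⟩ : Nonempty (Coalgebra.Repr k b (A × A)) := ⟨ℛ k b⟩
    have h1 : ρ (b • m) = ∑ i ∈ rb.index, rb.left i ⊗ₜ[k] (rb.right i • m) := by
      rw [hcompat b m, hm, ← rb.eq, TensorProduct.sum_tmul, map_sum]
      exact Finset.sum_congr rfl fun i _ => by rw [bigAction_tmul, mul_one]
    rw [hP, LinearMap.comp_apply, LinearMap.comp_apply, h1, map_sum, map_sum]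
    calc ∑ i ∈ rb.index, act (S.rTensor M (rb.left i ⊗ₜ[k] (rb.right i • m)))
        = ∑ i ∈ rb.index, (S (rb.left i) * rb.right i) • m := by
          refine Finset.sum_congr rfl fun i _ => ?_
          rw [LinearMap.rTensor_tmul, act_tmul, mul_smul]
      _ = (∑ i ∈ rb.index, S (rb.left i) * rb.right i) • m := by
          rw [Finset.sum_smul]
      _ = Coalgebra.counit (R := k) b • m := by
          rw [hS, sum_antipode_mul_eq_algebraMap_counit rb, algebraMap_smul]
  -- f0 ∘ inv0 = id
  have h1 : f0 ∘ₗ inv0 = LinearMap.id := by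
    have hsub : V.subtype ∘ₗ Q = P := LinearMap.subtype_comp_codRestrict _ _ _
    have L1 : act ∘ₗ act.lTensor A = act ∘ₗ (LinearMap.mul' k A).rTensor M
        ∘ₗ (TensorProduct.assoc k A A M).symm.toLinearMap := by
      ext a b m
      simp [act_tmul, LinearMap.mul'_apply, mul_smul]
    have L2 : (TensorProduct.assoc k A A M).symm.toLinearMap ∘ₗ (S.rTensor M).lTensor A =
        (S.lTensor A).rTensor M ∘ₗ (TensorProduct.assoc k A A M).symm.toLinearMap := by
      simpa [LinearMap.lTensor, LinearMap.rTensor, TensorProduct.map_id] using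
        (TensorProduct.map_map_comp_assoc_symm_eq (R := k) (.id (M := A)) S (.id (M := M))).symm
    have L3 : (TensorProduct.assoc k A A M).symm.toLinearMap ∘ₗ ρ.lTensor A ∘ₗ ρ =
        Δ.rTensor M ∘ₗ ρ := by
      apply LinearMap.ext; intro m
      have h := LinearMap.congr_fun hco m
      simp only [LinearMap.comp_apply, LinearEquiv.coe_coe] at h ⊢
      rw [h, LinearEquiv.symm_apply_apply]
    have L4 : act ∘ₗ (Algebra.linearMap k A).rTensor M = (TensorProduct.lid k M).toLinearMap := by
      ext c m
      simp [act_tmul, algebraMap_smul]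
    have L5 : (TensorProduct.lid k M).toLinearMap ∘ₗ (Coalgebra.counit (R := k)).rTensor M ∘ₗ ρ =
        LinearMap.id := by
      apply LinearMap.ext; intro m
      simpa [LinearMap.rTensor] using hcounit m
    calc f0 ∘ₗ inv0 = act ∘ₗ P.lTensor A ∘ₗ ρ := by
          rw [hf0, hinv0]
          simp only [LinearMap.comp_assoc]
          rw [show (V.subtype).lTensor A ∘ₗ Q.lTensor A ∘ₗ ρ = (P.lTensor A) ∘ₗ ρ from by
            rw [← LinearMap.comp_assoc, ← LinearMap.lTensor_comp, hsub]]
      _ = (act ∘ₗ act.lTensor A) ∘ₗ (S.rTensor M).lTensor A ∘ₗ ρ.lTensor A ∘ₗ ρ := by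
          rw [hP, LinearMap.lTensor_comp, LinearMap.lTensor_comp]
          simp only [LinearMap.comp_assoc]
      _ = act ∘ₗ (LinearMap.mul' k A).rTensor M ∘ₗ
            ((TensorProduct.assoc k A A M).symm.toLinearMap ∘ₗ (S.rTensor M).lTensor A) ∘ₗ
            ρ.lTensor A ∘ₗ ρ := by
          rw [L1]; simp only [LinearMap.comp_assoc]
      _ = act ∘ₗ (LinearMap.mul' k A).rTensor M ∘ₗ (S.lTensor A).rTensor M ∘ₗ
            ((TensorProduct.assoc k A A M).symm.toLinearMap ∘ₗ ρ.lTensor A ∘ₗ ρ) := by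
          rw [L2]; simp only [LinearMap.comp_assoc]
      _ = act ∘ₗ ((LinearMap.mul' k A) ∘ₗ (S.lTensor A) ∘ₗ Δ).rTensor M ∘ₗ ρ := by
          rw [L3, LinearMap.rTensor_comp, LinearMap.rTensor_comp]
          simp only [LinearMap.comp_assoc]
      _ = act ∘ₗ (Algebra.linearMap k A ∘ₗ Coalgebra.counit (R := k)).rTensor M ∘ₗ ρ := by
          rw [hS, hΔ, mul_antipode_lTensor_comul]
      _ = LinearMap.id := by
          rw [LinearMap.rTensor_comp]
          simp only [← LinearMap.comp_assoc]
          rw [L4, ← L5]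
          simp only [LinearMap.comp_assoc]
  -- inv0 ∘ f0 = id
  have h2 : inv0 ∘ₗ f0 = LinearMap.id := by
    apply TensorProduct.ext'
    intro a v
    rw [LinearMap.comp_apply, LinearMap.id_apply]
    obtain ⟨r⟩ : Nonempty (Coalgebra.Repr k a (A × A)) := ⟨ℛ k a⟩
    have hρav : ρ (a • (v : M)) = ∑ i ∈ r.index, r.left i ⊗ₜ[k] (r.right i • (v : M)) := by
      rw [hcompat a v, hv_coact v, ← r.eq, TensorProduct.sum_tmul, map_sum]
      exact Finset.sum_congr rfl fun i _ => by rw [bigAction_tmul, mul_one]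
    have hQ' : ∀ i, Q (r.right i • (v : M)) = Coalgebra.counit (R := k) (r.right i) • v := by
      intro i
      apply Subtype.ext
      have : (Q (r.right i • (v : M)) : M) = P (r.right i • (v : M)) := rfl
      rw [this, hPsmul _ _ (hv_coact v)]
      rfl
    rw [f0_tmul, hinv0, LinearMap.comp_apply, hρav, map_sum]
    calc ∑ i ∈ r.index, (Q.lTensor A) (r.left i ⊗ₜ[k] (r.right i • (v : M)))
        = ∑ i ∈ r.index, Coalgebra.counit (R := k) (r.right i) • (r.left i ⊗ₜ[k] v) := by
          refine Finset.sum_congr rfl fun i _ => ?_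
          rw [LinearMap.lTensor_tmul, hQ', TensorProduct.tmul_smul]
      _ = (∑ i ∈ r.index, Coalgebra.counit (R := k) (r.right i) • r.left i) ⊗ₜ[k] v := by
          rw [TensorProduct.sum_tmul]
          exact Finset.sum_congr rfl fun i _ => by rw [TensorProduct.smul_tmul']
      _ = a ⊗ₜ[k] v := by rw [sum_smul_counit r]
  obtain ⟨fe, hfe⟩ : ∃ e : (A ⊗[k] ↥V) ≃ₗ[k] M, e.toLinearMap = f0 :=
    ⟨LinearEquiv.ofLinear f0 inv0 h1 h2, rfl⟩
  have fe_apply : ∀ x : A ⊗[k] ↥V, fe x = f0 x := fun x => by rw [← hfe]; rfl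
  refine ⟨↥V, inferInstance, inferInstance, fe, ?_⟩
  intro a v
  obtain ⟨r⟩ : Nonempty (Coalgebra.Repr k a (A × A)) := ⟨ℛ k a⟩
  have hfv : fe (a ⊗ₜ[k] v) = a • (v : M) := by rw [fe_apply]; exact f0_tmul a v
  have lhs : bigAction k A M (Δ a ⊗ₜ[k] ((1 : A) ⊗ₜ[k] (v : M))) =
      ∑ i ∈ r.index, r.left i ⊗ₜ[k] (r.right i • (v : M)) := by
    rw [← r.eq, TensorProduct.sum_tmul, map_sum]
    exact Finset.sum_congr rfl fun i _ => by rw [bigAction_tmul, mul_one]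
  have rhs : (TensorProduct.map LinearMap.id fe.toLinearMap)
      ((TensorProduct.assoc k A A ↥V) (Δ a ⊗ₜ[k] v)) =
      ∑ i ∈ r.index, r.left i ⊗ₜ[k] (r.right i • (v : M)) := by
    rw [← r.eq, TensorProduct.sum_tmul, map_sum, map_sum]
    refine Finset.sum_congr rfl fun i _ => ?_
    rw [TensorProduct.assoc_tmul, TensorProduct.map_tmul, LinearMap.id_coe, id_eq]
    congr 1
    rw [hfe]
    exact f0_tmul _ v
  rw [hfv, hcompat a (v : M), hv_coact v, lhs, rhs]

end
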